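/- arXiv:1012.1297 — 4 statements merged into one kernel-verified Lean document; each statement's English description precedes it below -/
import Mathlib

section
/- Condition SE implies Condition RE: if the minimal m-sparse eigenvalue φ_min(m) of a symmetric positive semidefinite p×p matrix M satisfies φ_min((1+⌈(1+C)²·c⌉)s) ≥ κ' > 0 and φ_max(m') ≤ κ'' for appropriate sparse eigenvalue bounds, then the restricted eigenvalue κ_C² = min_{δ∈Δ_C} s·(δ'Mδ)/‖δ_T‖_1² is bounded below by a positive constant depending only on C, κ', κ''. In particular, for any δ ≠ 0 with ‖δ_{T^c}‖_1 ≤ C‖δ_T‖_1 and |T| = s, one has δ'Mδ ≥ κ̃²‖δ‖_2² for some κ̃ > 0 depending only on C, κ', κ''. -/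
open Matrix Finset

section aux

variable {ι : Type*} [DecidableEq ι]

/-- Select the `min m S.card` largest elements of `S` (by `|δ ·|`). -/
lemma re_exists_top_select (δ : ι → ℝ) :
    ∀ (m : ℕ) (S : Finset ι), ∃ P, P ⊆ S ∧ P.card = min m S.card ∧
      ∀ i ∈ S \ P, ∀ j ∈ P, |δ i| ≤ |δ j| := by
  intro m
  induction m with
  | zero => intro S; exact ⟨∅, empty_subset _, by simp, by simp⟩
  | succ m ih =>
    intro S
    rcases S.eq_empty_or_nonempty with rfl | hS
    · exact ⟨∅, empty_subset _, by simp, by simp⟩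
    · obtain ⟨j₀, hj₀S, hmax⟩ := S.exists_max_image (fun i => |δ i|) hS
      obtain ⟨P', hP'sub, hP'card, hP'max⟩ := ih (S.erase j₀)
      have hj₀P' : j₀ ∉ P' := fun h => (Finset.notMem_erase j₀ S) (hP'sub h)
      refine ⟨insert j₀ P', ?_, ?_, ?_⟩
      · exact insert_subset hj₀S (hP'sub.trans (erase_subset _ _))
      · rw [Finset.card_insert_of_notMem hj₀P', hP'card, Finset.card_erase_of_mem hj₀S]
        have : 1 ≤ S.card := Finset.card_pos.mpr hS
        omega
      · intro i hi j hj
        have hiS : i ∈ S := (Finset.mem_sdiff.1 hi).1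
        have hiP : i ∉ insert j₀ P' := (Finset.mem_sdiff.1 hi).2
        rcases Finset.mem_insert.1 hj with rfl | hj
        · exact hmax i hiS
        · refine hP'max i ?_ j hj
          refine Finset.mem_sdiff.2 ⟨Finset.mem_erase.2 ⟨?_, hiS⟩,
            fun h => hiP (Finset.mem_insert_of_mem h)⟩
          rintro rfl; exact hiP (Finset.mem_insert_self _ _)

/-- If `P` consists of the `min m S.card` largest elements, each remaining element is
bounded by the average over `P`. -/
lemma re_top_bound (δ : ι → ℝ) (m : ℕ) (S P : Finset ι) (hsub : P ⊆ S)
    (hcard : P.card = min m S.card) (hmax : ∀ i ∈ S \ P, ∀ j ∈ P, |δ i| ≤ |δ j|) :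
    ∀ i ∈ S \ P, (m : ℝ) * |δ i| ≤ ∑ j ∈ P, |δ j| := by
  intro i hi
  have hne : P ≠ S := by
    rintro rfl
    rcases Finset.mem_sdiff.1 hi with ⟨h1, h2⟩
    exact h2 h1
  have hlt : P.card < S.card := Finset.card_lt_card (lt_of_le_of_ne hsub hne)
  have hPm : P.card = m := by omega
  calc (m : ℝ) * |δ i| = ∑ _j ∈ P, |δ i| := by
        rw [Finset.sum_const, hPm, nsmul_eq_mul]
    _ ≤ ∑ j ∈ P, |δ j| := Finset.sum_le_sum fun j hj => hmax i hi j hj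

/-- Restriction of a vector to a finite set. -/
def re_restr (δ : ι → ℝ) (F : Finset ι) : ι → ℝ := fun i => if i ∈ F then δ i else 0

lemma re_restr_sq_sum [Fintype ι] (δ : ι → ℝ) (F : Finset ι) :
    ∑ i, (re_restr δ F) i ^ 2 = ∑ i ∈ F, δ i ^ 2 := by
  have h : ∀ i, (re_restr δ F) i ^ 2 = if i ∈ F then δ i ^ 2 else 0 := by
    intro i
    simp only [re_restr]
    split <;> simp
  simp only [h]
  rw [Finset.sum_ite_mem, Finset.univ_inter]

/-- Block decomposition: any vector whose entries (on `S`) are dominated by `B/m` can be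
decomposed into `m`-sparse blocks whose `ℓ2`-norms sum to at most `(B + ‖δ_S‖₁)/√m`. -/
lemma re_decomp (δ : ι → ℝ) (m : ℕ) (hm : 0 < m) :
    ∀ (S : Finset ι) (B : ℝ), 0 ≤ B → (∀ i ∈ S, (m : ℝ) * |δ i| ≤ B) →
    ∃ L : List (Finset ι),
      (∀ P ∈ L, P ⊆ S ∧ P.card ≤ m) ∧
      (L.map (re_restr δ)).sum = re_restr δ S ∧
      (L.map (fun P => Real.sqrt (∑ i ∈ P, δ i ^ 2))).sum
        ≤ (B + ∑ i ∈ S, |δ i|) / Real.sqrt m := by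
  intro S
  induction S using Finset.strongInduction with
  | _ S ih =>
    intro B hB hBig
    rcases S.eq_empty_or_nonempty with rfl | hS
    · refine ⟨[], by simp, ?_, ?_⟩
      · funext i; simp [re_restr]
      · simp only [List.map_nil, List.sum_nil, Finset.sum_empty, add_zero]
        exact div_nonneg hB (Real.sqrt_nonneg _)
    · obtain ⟨P₀, hP₀sub, hP₀card, hP₀max⟩ := re_exists_top_select δ m S
      have hP₀pos : 0 < P₀.card := by
        rw [hP₀card]; exact lt_min hm (Finset.card_pos.mpr hS)
      have hP₀ne : P₀.Nonempty := Finset.card_pos.mp hP₀pos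
      have hssub : S \ P₀ ⊂ S := by
        refine Finset.sdiff_ssubset ?_ hP₀ne
        exact hP₀sub
      have hB'0 : (0:ℝ) ≤ ∑ j ∈ P₀, |δ j| := Finset.sum_nonneg fun _ _ => abs_nonneg _
      have hBig' := re_top_bound δ m S P₀ hP₀sub hP₀card hP₀max
      obtain ⟨L', hL'mem, hL'sum, hL'norm⟩ := ih (S \ P₀) hssub (∑ j ∈ P₀, |δ j|) hB'0 hBig'
      have hm0 : (0:ℝ) < (m:ℝ) := by exact_mod_cast hm
      have hsm : (0:ℝ) < Real.sqrt m := Real.sqrt_pos.mpr hm0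
      refine ⟨P₀ :: L', ?_, ?_, ?_⟩
      · rintro P hP
        rcases List.mem_cons.1 hP with rfl | hP
        · exact ⟨hP₀sub, by rw [hP₀card]; exact min_le_left _ _⟩
        · exact ⟨((hL'mem P hP).1).trans (Finset.sdiff_subset), (hL'mem P hP).2⟩
      · rw [List.map_cons, List.sum_cons, hL'sum]
        funext i
        simp only [re_restr, Pi.add_apply, Finset.mem_sdiff]
        by_cases h0 : i ∈ P₀
        · simp [h0, hP₀sub h0]
        · by_cases h1 : i ∈ S <;> simp [h0, h1]
      · rw [List.map_cons, List.sum_cons]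
        have hBm : ∀ i ∈ P₀, |δ i| ≤ B / m := by
          intro i hi
          rw [le_div_iff₀ hm0]
          rw [mul_comm]
          exact hBig i (hP₀sub hi)
        have hsum1 : ∑ i ∈ P₀, |δ i| ≤ B := by
          calc ∑ i ∈ P₀, |δ i| ≤ ∑ _i ∈ P₀, B / m := Finset.sum_le_sum hBm
            _ = P₀.card * (B / m) := by rw [Finset.sum_const, nsmul_eq_mul]
            _ ≤ m * (B / m) := by
                have hcard : (P₀.card : ℝ) ≤ (m:ℝ) := by
                  exact_mod_cast (hP₀card ▸ min_le_left m S.card)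
                exact mul_le_mul_of_nonneg_right hcard (by positivity)
            _ = B := by field_simp
        have key : Real.sqrt (∑ i ∈ P₀, δ i ^ 2) ≤ B / Real.sqrt m := by
          have h1 : ∑ i ∈ P₀, δ i ^ 2 ≤ (B / Real.sqrt m) ^ 2 := by
            have h2 : (B / Real.sqrt m) ^ 2 = B / m * B := by
              rw [div_pow, Real.sq_sqrt hm0.le]; ring
            rw [h2]
            calc ∑ i ∈ P₀, δ i ^ 2 = ∑ i ∈ P₀, |δ i| * |δ i| := by
                  simp only [sq]
                  exact Finset.sum_congr rfl fun i _ => (abs_mul_abs_self _).symm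
              _ ≤ ∑ i ∈ P₀, (B / m) * |δ i| :=
                  Finset.sum_le_sum fun i hi =>
                    mul_le_mul_of_nonneg_right (hBm i hi) (abs_nonneg _)
              _ = (B / m) * ∑ i ∈ P₀, |δ i| := by rw [Finset.mul_sum]
              _ ≤ B / m * B := mul_le_mul_of_nonneg_left hsum1 (by positivity)
          calc Real.sqrt (∑ i ∈ P₀, δ i ^ 2) ≤ Real.sqrt ((B / Real.sqrt m) ^ 2) :=
                Real.sqrt_le_sqrt h1
            _ = B / Real.sqrt m := Real.sqrt_sq (by positivity)
        have hsplit : ∑ i ∈ S, |δ i| = ∑ i ∈ S \ P₀, |δ i| + ∑ i ∈ P₀, |δ i| :=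
          (Finset.sum_sdiff hP₀sub).symm
        rw [hsplit]
        have := add_le_add key hL'norm
        calc Real.sqrt (∑ i ∈ P₀, δ i ^ 2)
              + (L'.map (fun P => Real.sqrt (∑ i ∈ P, δ i ^ 2))).sum
            ≤ B / Real.sqrt m + (∑ j ∈ P₀, |δ j| + ∑ i ∈ S \ P₀, |δ i|) / Real.sqrt m :=
              this
          _ = (B + (∑ i ∈ S \ P₀, |δ i| + ∑ i ∈ P₀, |δ i|)) / Real.sqrt m := by
              rw [← add_div]
              ring_nf

variable [Fintype ι]

/-- Euclidean norm of a vector. -/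
noncomputable def re_n2 (v : ι → ℝ) : ℝ := ‖(EuclideanSpace.equiv ι ℝ).symm v‖

lemma re_n2_eq (v : ι → ℝ) : re_n2 v = Real.sqrt (∑ i, v i ^ 2) := by
  rw [re_n2, EuclideanSpace.norm_eq]
  simp [Real.norm_eq_abs, sq_abs]

lemma re_n2_nonneg (v : ι → ℝ) : 0 ≤ re_n2 v := norm_nonneg _

lemma re_n2_add (u v : ι → ℝ) : re_n2 (u + v) ≤ re_n2 u + re_n2 v := by
  rw [re_n2, re_n2, re_n2, map_add]; exact norm_add_le _ _

lemma re_n2_sub (u v : ι → ℝ) : re_n2 (u - v) ≤ re_n2 u + re_n2 v := by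
  rw [re_n2, re_n2, re_n2, map_sub]; exact norm_sub_le _ _

lemma re_n2_zero : re_n2 (0 : ι → ℝ) = 0 := by
  rw [re_n2, map_zero, norm_zero]

lemma re_mulVec_list_sum {ι' : Type*} (A : Matrix ι' ι ℝ) (l : List (ι → ℝ)) :
    A.mulVec l.sum = (l.map (fun v => A.mulVec v)).sum := by
  induction l with
  | nil => simp
  | cons h t ih => rw [List.sum_cons, Matrix.mulVec_add, ih, List.map_cons, List.sum_cons]

lemma re_n2_list_sum (l : List (ι → ℝ)) : re_n2 l.sum ≤ (l.map re_n2).sum := by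
  induction l with
  | nil => simp [re_n2_zero]
  | cons h t ih =>
    rw [List.sum_cons, List.map_cons, List.sum_cons]
    exact (re_n2_add h t.sum).trans (by linarith)

end aux

set_option maxHeartbeats 2000000 in
/-- Condition SE implies Condition RE: sparse eigenvalue bounds (with sparsity level
`(1 + ⌈(1+C)² (κ''/κ')⌉) s`) imply a restricted eigenvalue bound with a constant `κ̃`
depending only on `C, κ', κ''`: for every `δ ≠ 0` in the restricted set `Δ_C`,
`κ̃² ‖δ‖₂² ≤ δ'Mδ` and `κ̃² ‖δ_T‖₁² ≤ s · δ'Mδ`. -/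
theorem stmt_3 (C κ' κ'' : ℝ) (hC : 0 < C) (hκ' : 0 < κ') (hκ'' : 0 < κ'') :
    ∃ κt > (0:ℝ), ∀ (p s : ℕ) (M : Matrix (Fin p) (Fin p) ℝ), M.PosSemidef →
      ∀ T : Finset (Fin p), T.card = s → 0 < s →
      (∀ δ : Fin p → ℝ,
          (Finset.univ.filter fun j => δ j ≠ 0).card ≤ (1 + ⌈(1+C)^2 * (κ''/κ')⌉₊) * s →
          κ' * ∑ j, δ j ^ 2 ≤ δ ⬝ᵥ M.mulVec δ) →
      (∀ δ : Fin p → ℝ,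
          (Finset.univ.filter fun j => δ j ≠ 0).card ≤ (1 + ⌈(1+C)^2 * (κ''/κ')⌉₊) * s →
          δ ⬝ᵥ M.mulVec δ ≤ κ'' * ∑ j, δ j ^ 2) →
      ∀ δ : Fin p → ℝ, δ ≠ 0 →
        (∑ j ∈ Tᶜ, |δ j|) ≤ C * ∑ j ∈ T, |δ j| →
        κt ^ 2 * ∑ j, δ j ^ 2 ≤ δ ⬝ᵥ M.mulVec δ ∧
        κt ^ 2 * (∑ j ∈ T, |δ j|) ^ 2 ≤ (s : ℝ) * (δ ⬝ᵥ M.mulVec δ) := by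
  classical
  have h1C : (0:ℝ) < 1 + C := by linarith
  refine ⟨Real.sqrt κ' / (2 * (1 + C)), by positivity, ?_⟩
  intro p s M hM T hT hs h1 h2 δ hδ hRE
  set k : ℕ := ⌈(1+C)^2 * (κ''/κ')⌉₊ with hkdef
  have hk1 : 1 ≤ k := Nat.one_le_ceil_iff.mpr (by positivity)
  set m : ℕ := k * s with hmdef
  have hm1 : 0 < m := Nat.mul_pos (by omega) hs
  have hm0 : (0:ℝ) < (m:ℝ) := by exact_mod_cast hm1
  obtain ⟨A, hA⟩ : ∃ A : Matrix (Fin p) (Fin p) ℝ, M = Aᴴ * A := by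
    open scoped MatrixOrder in
    obtain ⟨B, hB⟩ := CStarAlgebra.nonneg_iff_eq_star_mul_self.mp hM.nonneg
    exact ⟨B, by rw [hB, star_eq_conjTranspose]⟩
  -- dot product via A
  have dot_eq : ∀ v : Fin p → ℝ, v ⬝ᵥ M.mulVec v = ∑ i, (A.mulVec v) i ^ 2 := by
    intro v
    rw [hA, ← Matrix.mulVec_mulVec, Matrix.dotProduct_mulVec, Matrix.vecMul_conjTranspose]
    simp [dotProduct, sq]
  have dot_nonneg : ∀ v : Fin p → ℝ, 0 ≤ v ⬝ᵥ M.mulVec v := by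
    intro v; rw [dot_eq]; positivity
  have q_eq : ∀ v : Fin p → ℝ, re_n2 (A.mulVec v) = Real.sqrt (v ⬝ᵥ M.mulVec v) := by
    intro v; rw [re_n2_eq, dot_eq]
  -- κ' ≤ κ''
  obtain ⟨j, hj⟩ : ∃ j, δ j ≠ 0 := by
    by_contra h
    push_neg at h
    exact hδ (funext h)
  have hcardbound : ∀ (F : Finset (Fin p)), F.card ≤ (1 + k) * s →
      (Finset.univ.filter fun i => re_restr δ F i ≠ 0).card ≤ (1 + k) * s := by
    intro F hF
    refine le_trans (Finset.card_le_card ?_) hF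
    intro i hi
    simp only [Finset.mem_filter, re_restr] at hi
    by_contra h
    simp [h] at hi
  have hκle : κ' ≤ κ'' := by
    set e : Fin p → ℝ := fun i => if i = j then 1 else 0 with he
    have hsupp : (Finset.univ.filter fun i => e i ≠ 0).card ≤ (1 + k) * s := by
      have heq : (Finset.univ.filter fun i => e i ≠ 0) = {j} := by
        ext i
        simp only [Finset.mem_filter, Finset.mem_univ, true_and, Finset.mem_singleton, he]
        by_cases h : i = j <;> simp [h]
      rw [heq, Finset.card_singleton]
      calc 1 ≤ 1 * s := by omega
        _ ≤ (1 + k) * s := Nat.mul_le_mul_right _ (by omega)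
    have hsum : ∑ i, e i ^ 2 = 1 := by
      simp only [he, apply_ite (· ^ 2)]
      simp [Finset.sum_ite_eq']
    have := (h1 e hsupp).trans (h2 e hsupp)
    rwa [hsum, mul_one, mul_one] at this
  -- top selection on Tᶜ
  obtain ⟨T₁, hT₁sub, hT₁card, hT₁max⟩ := re_exists_top_select δ m Tᶜ
  have hBig := re_top_bound δ m Tᶜ T₁ hT₁sub hT₁card hT₁max
  have hB'0 : (0:ℝ) ≤ ∑ i ∈ T₁, |δ i| := Finset.sum_nonneg fun _ _ => abs_nonneg _
  obtain ⟨L, hLmem, hLsum, hLnorm⟩ := re_decomp δ m hm1 (Tᶜ \ T₁) (∑ i ∈ T₁, |δ i|) hB'0 hBig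
  set u : Fin p → ℝ := re_restr δ (T ∪ T₁) with hu
  set w : Fin p → ℝ := (L.map (re_restr δ)).sum with hw
  have hδeq : δ = u + w := by
    rw [hLsum]
    funext i
    simp only [hu, Pi.add_apply, re_restr, Finset.mem_union, Finset.mem_sdiff,
      Finset.mem_compl]
    by_cases hT' : i ∈ T
    · have h1' : i ∉ T₁ := fun h => by
        have := hT₁sub h
        simp [hT'] at this
      simp [hT', h1']
    · by_cases h1' : i ∈ T₁ <;> simp [hT', h1']
  -- norms
  set a : ℝ := re_n2 u with ha
  set t : ℝ := re_n2 (re_restr δ T) with ht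
  set R : ℝ := (L.map (fun P => re_n2 (re_restr δ P))).sum with hR
  have ha0 : 0 ≤ a := re_n2_nonneg _
  have ht0 : 0 ≤ t := re_n2_nonneg _
  have hR0 : 0 ≤ R := by
    rw [hR]
    apply List.sum_nonneg
    intro x hx
    obtain ⟨P, _, rfl⟩ := List.mem_map.1 hx
    exact re_n2_nonneg _
  -- t ≤ a
  have hta : t ≤ a := by
    rw [ht, ha, re_n2_eq, re_n2_eq, hu, re_restr_sq_sum, re_restr_sq_sum]
    apply Real.sqrt_le_sqrt
    exact Finset.sum_le_sum_of_subset_of_nonneg (Finset.subset_union_left)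
      (fun i _ _ => sq_nonneg _)
  -- R bound
  have hsq : Real.sqrt (s : ℝ) * t = Real.sqrt ((s:ℝ) * ∑ i ∈ T, δ i ^ 2) := by
    rw [ht, re_n2_eq, re_restr_sq_sum, ← Real.sqrt_mul (Nat.cast_nonneg s)]
  have hT1 : ∑ i ∈ T, |δ i| ≤ Real.sqrt (s:ℝ) * t := by
    rw [hsq]
    rw [Real.le_sqrt (Finset.sum_nonneg fun _ _ => abs_nonneg _) (by positivity)]
    have := sq_sum_le_card_mul_sum_sq (s := T) (f := fun i => |δ i|)
    simpa [hT, sq_abs] using this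
  have hRbound : R ≤ C * (Real.sqrt (s:ℝ) * t) / Real.sqrt m := by
    have e1 : R = (L.map (fun P => Real.sqrt (∑ i ∈ P, δ i ^ 2))).sum := by
      rw [hR]
      congr 1
      apply List.map_congr_left
      intro P _
      rw [re_n2_eq, re_restr_sq_sum]
    have e2 : ∑ i ∈ T₁, |δ i| + ∑ i ∈ Tᶜ \ T₁, |δ i| = ∑ i ∈ Tᶜ, |δ i| := by
      rw [add_comm]; exact Finset.sum_sdiff hT₁sub
    rw [e1]
    refine hLnorm.trans ?_
    rw [e2]
    gcongr
    exact hRE.trans (mul_le_mul_of_nonneg_left hT1 hC.le)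
  -- key constant inequality
  have hmR : (1+C)^2 * (κ''/κ') * s ≤ (m:ℝ) := by
    have h := Nat.le_ceil ((1+C)^2 * (κ''/κ'))
    have : (m:ℝ) = (k:ℝ) * (s:ℝ) := by rw [hmdef]; push_cast; ring
    rw [this]
    have hs1 : (1:ℝ) ≤ (s:ℝ) := by exact_mod_cast hs
    nlinarith [h, hs1, (Nat.cast_nonneg s : (0:ℝ) ≤ (s:ℝ))]
  have hβ : Real.sqrt κ'' * (C * Real.sqrt (s:ℝ) / Real.sqrt m)
      ≤ Real.sqrt κ' * (C / (1 + C)) := by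
    have e1 : Real.sqrt κ'' * (C * Real.sqrt (s:ℝ) / Real.sqrt m)
        = Real.sqrt (κ'' * (C^2 * s / m)) := by
      rw [Real.sqrt_mul hκ''.le, Real.sqrt_div (by positivity), Real.sqrt_mul (sq_nonneg C),
        Real.sqrt_sq hC.le]
    have e2 : Real.sqrt κ' * (C / (1 + C)) = Real.sqrt (κ' * (C / (1 + C))^2) := by
      rw [Real.sqrt_mul hκ'.le, Real.sqrt_sq (by positivity)]
    rw [e1, e2]
    apply Real.sqrt_le_sqrt
    have h' : (1+C)^2 * κ'' * s ≤ κ' * m := by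
      have h'' := mul_le_mul_of_nonneg_left hmR hκ'.le
      calc (1+C)^2 * κ'' * s = κ' * ((1+C)^2 * (κ''/κ') * s) := by
            field_simp
        _ ≤ κ' * m := h''
    have lhs_eq : κ'' * (C^2 * s / m) = κ'' * C^2 * (s:ℝ) / m := by ring
    have rhs_eq : κ' * (C / (1 + C))^2 = κ' * C^2 / (1+C)^2 := by
      rw [div_pow]; ring
    rw [lhs_eq, rhs_eq, div_le_div_iff₀ hm0 (by positivity)]
    nlinarith [mul_le_mul_of_nonneg_left h' (sq_nonneg C)]
  have hβ1 : C * Real.sqrt (s:ℝ) / Real.sqrt m ≤ 1 := by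
    have h1' : Real.sqrt κ' ≤ Real.sqrt κ'' := Real.sqrt_le_sqrt hκle
    have h2' : C / (1 + C) ≤ 1 := by
      rw [div_le_one h1C]; linarith
    have h3' : Real.sqrt κ'' * (C * Real.sqrt (s:ℝ) / Real.sqrt m)
        ≤ Real.sqrt κ'' * 1 := by
      calc Real.sqrt κ'' * (C * Real.sqrt (s:ℝ) / Real.sqrt m)
          ≤ Real.sqrt κ' * (C / (1 + C)) := hβ
        _ ≤ Real.sqrt κ'' * 1 := by
            apply mul_le_mul h1' h2' (by positivity) (Real.sqrt_nonneg _)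
    exact le_of_mul_le_mul_left h3' (Real.sqrt_pos.mpr hκ'')
  -- support bounds
  have hucard : (Finset.univ.filter fun i => u i ≠ 0).card ≤ (1 + k) * s := by
    apply hcardbound
    calc (T ∪ T₁).card ≤ T.card + T₁.card := Finset.card_union_le _ _
      _ ≤ s + m := by
          rw [hT, hT₁card]
          exact Nat.add_le_add_left (min_le_left _ _) s
      _ = (1 + k) * s := by rw [hmdef]; ring
  have hPcard : ∀ P ∈ L, (Finset.univ.filter fun i => re_restr δ P i ≠ 0).card
      ≤ (1 + k) * s := by
    intro P hP
    apply hcardbound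
    calc P.card ≤ m := (hLmem P hP).2
      _ = k * s := hmdef
      _ ≤ (1 + k) * s := Nat.mul_le_mul_right _ (by omega)
  -- eigenvalue applications
  have H1 : Real.sqrt κ' * a ≤ re_n2 (A.mulVec u) := by
    have h := h1 u hucard
    rw [q_eq]
    have e1 : Real.sqrt κ' * a = Real.sqrt (κ' * ∑ i, u i ^ 2) := by
      rw [ha, re_n2_eq, Real.sqrt_mul hκ'.le]
    rw [e1]
    exact Real.sqrt_le_sqrt h
  have H3 : re_n2 (A.mulVec w) ≤ Real.sqrt κ'' * R := by
    have e1 : A.mulVec w = (L.map (fun P => A.mulVec (re_restr δ P))).sum := by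
      rw [hw, re_mulVec_list_sum, List.map_map]
      rfl
    rw [e1]
    calc re_n2 ((L.map (fun P => A.mulVec (re_restr δ P))).sum)
        ≤ ((L.map (fun P => A.mulVec (re_restr δ P))).map re_n2).sum := re_n2_list_sum _
      _ = (L.map (fun P => re_n2 (A.mulVec (re_restr δ P)))).sum := by
          rw [List.map_map]
          rfl
      _ ≤ (L.map (fun P => Real.sqrt κ'' * re_n2 (re_restr δ P))).sum := by
          apply List.sum_le_sum
          intro P hP
          rw [q_eq]
          have h := h2 (re_restr δ P) (hPcard P hP)
          have e2 : Real.sqrt κ'' * re_n2 (re_restr δ P)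
              = Real.sqrt (κ'' * ∑ i, re_restr δ P i ^ 2) := by
            rw [re_n2_eq, Real.sqrt_mul hκ''.le]
          rw [e2]
          exact Real.sqrt_le_sqrt h
      _ = Real.sqrt κ'' * R := by rw [hR, ← List.sum_map_mul_left]
  have H2 : re_n2 (A.mulVec u) ≤ re_n2 (A.mulVec δ) + re_n2 (A.mulVec w) := by
    have e0 : u = δ - w := by
      rw [hδeq]
      funext i
      simp
    have e1 : A.mulVec u = A.mulVec δ - A.mulVec w := by
      rw [e0, Matrix.mulVec_sub]
    rw [e1]
    exact re_n2_sub _ _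
  have H6 : re_n2 δ ≤ a + R := by
    nth_rewrite 1 [hδeq]
    refine (re_n2_add u w).trans ?_
    apply add_le_add_right
    rw [hw, hR]
    refine (re_n2_list_sum _).trans (le_of_eq ?_)
    rw [List.map_map]
    rfl
  -- combine
  have P1 : Real.sqrt κ'' * R ≤ Real.sqrt κ' * (C / (1 + C)) * t := by
    calc Real.sqrt κ'' * R ≤ Real.sqrt κ'' * (C * Real.sqrt (s:ℝ) / Real.sqrt m * t) := by
          apply mul_le_mul_of_nonneg_left _ (Real.sqrt_nonneg _)
          calc R ≤ C * (Real.sqrt (s:ℝ) * t) / Real.sqrt m := hRbound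
            _ = C * Real.sqrt (s:ℝ) / Real.sqrt m * t := by ring
      _ = Real.sqrt κ'' * (C * Real.sqrt (s:ℝ) / Real.sqrt m) * t := by ring
      _ ≤ Real.sqrt κ' * (C / (1 + C)) * t := mul_le_mul_of_nonneg_right hβ ht0
  have P4 : R ≤ a := by
    calc R ≤ C * (Real.sqrt (s:ℝ) * t) / Real.sqrt m := hRbound
      _ = (C * Real.sqrt (s:ℝ) / Real.sqrt m) * t := by ring
      _ ≤ 1 * t := mul_le_mul_of_nonneg_right hβ1 ht0
      _ = t := one_mul t
      _ ≤ a := hta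
  have P2 : Real.sqrt κ' * (C / (1 + C)) * t ≤ Real.sqrt κ' * (C / (1 + C)) * a :=
    mul_le_mul_of_nonneg_left hta (by positivity)
  have key : Real.sqrt κ' / (2 * (1 + C)) * re_n2 δ ≤ re_n2 (A.mulVec δ) := by
    have hqδ : Real.sqrt κ' * a - Real.sqrt κ' * (C / (1 + C)) * a ≤ re_n2 (A.mulVec δ) := by
      linarith [H1, H2, H3, P1, P2]
    have e1 : Real.sqrt κ' * a - Real.sqrt κ' * (C / (1 + C)) * a
        = Real.sqrt κ' * a / (1 + C) := by
      field_simp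
      ring
    have e2 : Real.sqrt κ' / (2 * (1 + C)) * (2 * a) = Real.sqrt κ' * a / (1 + C) := by
      field_simp
    have h5 : re_n2 δ ≤ 2 * a := by linarith [H6, P4]
    calc Real.sqrt κ' / (2 * (1 + C)) * re_n2 δ
        ≤ Real.sqrt κ' / (2 * (1 + C)) * (2 * a) := by
          apply mul_le_mul_of_nonneg_left h5 (by positivity)
      _ = Real.sqrt κ' * a / (1 + C) := e2
      _ ≤ re_n2 (A.mulVec δ) := by rw [← e1]; exact hqδ
  -- conclude
  have goal1 : (Real.sqrt κ' / (2 * (1 + C))) ^ 2 * ∑ i, δ i ^ 2 ≤ δ ⬝ᵥ M.mulVec δ := by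
    have h := pow_le_pow_left₀ (mul_nonneg (by positivity) (re_n2_nonneg δ)) key 2
    rw [mul_pow] at h
    have e1 : re_n2 δ ^ 2 = ∑ i, δ i ^ 2 := by
      rw [re_n2_eq, Real.sq_sqrt (by positivity)]
    have e2 : re_n2 (A.mulVec δ) ^ 2 = δ ⬝ᵥ M.mulVec δ := by
      rw [q_eq, Real.sq_sqrt (dot_nonneg δ)]
    rw [e1, e2] at h
    exact h
  refine ⟨goal1, ?_⟩
  have hT2 : (∑ i ∈ T, |δ i|) ^ 2 ≤ (s:ℝ) * ∑ i, δ i ^ 2 := by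
    calc (∑ i ∈ T, |δ i|) ^ 2 ≤ (T.card : ℝ) * ∑ i ∈ T, |δ i| ^ 2 :=
          sq_sum_le_card_mul_sum_sq
      _ = (s:ℝ) * ∑ i ∈ T, δ i ^ 2 := by rw [hT]; simp [sq_abs]
      _ ≤ (s:ℝ) * ∑ i, δ i ^ 2 := by
          apply mul_le_mul_of_nonneg_left _ (Nat.cast_nonneg s)
          exact Finset.sum_le_sum_of_subset_of_nonneg (Finset.subset_univ T)
            (fun i _ _ => sq_nonneg _)
  calc (Real.sqrt κ' / (2 * (1 + C))) ^ 2 * (∑ i ∈ T, |δ i|) ^ 2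
      ≤ (Real.sqrt κ' / (2 * (1 + C))) ^ 2 * ((s:ℝ) * ∑ i, δ i ^ 2) := by
        apply mul_le_mul_of_nonneg_left hT2 (by positivity)
    _ = (s:ℝ) * ((Real.sqrt κ' / (2 * (1 + C))) ^ 2 * ∑ i, δ i ^ 2) := by ring
    _ ≤ (s:ℝ) * (δ ⬝ᵥ M.mulVec δ) := by
        apply mul_le_mul_of_nonneg_left goal1 (Nat.cast_nonneg s)
end

section
/- Basic LASSO inequality: let β̂ minimize Q̂(β) + (λ/n)‖β‖_1 where Q̂(β) = (1/n)∑_i (y_i - f_i'β)². Write y_i = f_i'β_0 + a_i + v_i with (1/n)∑_i a_i² ≤ c_s² and score S = (2/n)∑_i f_i v_i. If λ ≥ c·n‖S‖_∞ for some c > 1, then for δ = β̂ - β_0: ‖f_i'δ‖_{2,n}² ≤ (1+1/c)(λ/n)‖δ_T‖_1 - (1-1/c)(λ/n)‖δ_{T^c}‖_1 + 2c_s‖f_i'δ‖_{2,n}, where T = support(β_0) and ‖f_i'δ‖_{2,n}² = (1/n)∑_i (f_i'δ)². -/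
open Finset

/-- Basic LASSO inequality: if `β̂` minimizes the LASSO criterion and `λ ≥ c·n‖S‖_∞`
with `c > 1`, then for `δ = β̂ - β_0`,
`‖f'δ‖²_{2,n} ≤ (1+1/c)(λ/n)‖δ_T‖₁ - (1-1/c)(λ/n)‖δ_{T^c}‖₁ + 2 c_s ‖f'δ‖_{2,n}`. -/
theorem stmt_4 (n p : ℕ) (hn : 0 < n) (hp : 0 < p)
    (f : Fin n → Fin p → ℝ) (β0 βh : Fin p → ℝ) (a v y : Fin n → ℝ)
    (cs lam c : ℝ) (hc : 1 < c) (hcs : 0 ≤ cs)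
    (hy : ∀ i, y i = (∑ j, f i j * β0 j) + a i + v i)
    (ha : (1/(n:ℝ)) * ∑ i, (a i)^2 ≤ cs^2)
    (hlam : c * ((n:ℝ) * ⨆ j, |(2/(n:ℝ)) * ∑ i, f i j * v i|) ≤ lam)
    (hmin : ∀ β : Fin p → ℝ,
      (1/(n:ℝ)) * (∑ i, (y i - ∑ j, f i j * βh j)^2) + (lam/(n:ℝ)) * ∑ j, |βh j|
        ≤ (1/(n:ℝ)) * (∑ i, (y i - ∑ j, f i j * β j)^2) + (lam/(n:ℝ)) * ∑ j, |β j|) :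
    (1/(n:ℝ)) * ∑ i, (∑ j, f i j * (βh j - β0 j))^2
      ≤ (1 + 1/c) * (lam/(n:ℝ)) *
            (∑ j ∈ Finset.univ.filter (fun j => β0 j ≠ 0), |βh j - β0 j|)
        - (1 - 1/c) * (lam/(n:ℝ)) *
            (∑ j ∈ (Finset.univ.filter (fun j => β0 j ≠ 0))ᶜ, |βh j - β0 j|)
        + 2 * cs * Real.sqrt ((1/(n:ℝ)) * ∑ i, (∑ j, f i j * (βh j - β0 j))^2) := by
  have hn' : (0:ℝ) < n := by exact_mod_cast hn
  have hn0 : (n:ℝ) ≠ 0 := ne_of_gt hn'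
  have hc0 : (0:ℝ) < c := lt_trans one_pos hc
  set δ : Fin p → ℝ := fun j => βh j - β0 j with hδ
  set D : Fin n → ℝ := fun i => ∑ j, f i j * δ j with hDdef
  set T : Finset (Fin p) := Finset.univ.filter (fun j => β0 j ≠ 0) with hT
  set S : Fin p → ℝ := fun j => (2/(n:ℝ)) * ∑ i, f i j * v i with hS
  set M : ℝ := ⨆ j, |S j| with hM
  show (1/(n:ℝ)) * ∑ i, (D i)^2
      ≤ (1 + 1/c) * (lam/(n:ℝ)) * (∑ j ∈ T, |δ j|)
        - (1 - 1/c) * (lam/(n:ℝ)) * (∑ j ∈ Tᶜ, |δ j|)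
        + 2 * cs * Real.sqrt ((1/(n:ℝ)) * ∑ i, (D i)^2)
  -- basic facts about M and lam
  haveI : Nonempty (Fin p) := ⟨⟨0, hp⟩⟩
  have hMle : ∀ j, |S j| ≤ M := by
    intro j
    rw [hM]
    exact le_ciSup (Set.Finite.bddAbove (Set.finite_range fun j => |S j|)) j
  have hM0 : 0 ≤ M := le_trans (abs_nonneg _) (hMle ⟨0, hp⟩)
  have hlam0 : 0 ≤ lam := le_trans (by positivity) hlam
  have hM1 : M ≤ lam / (c * (n:ℝ)) := by
    rw [le_div_iff₀ (by positivity)]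
    nlinarith [hlam]
  -- key inequality from optimality
  have hDi : ∀ i, D i = (∑ j, f i j * βh j) - (∑ j, f i j * β0 j) := by
    intro i
    simp only [hDdef, hδ, mul_sub, Finset.sum_sub_distrib]
  have key : (1/(n:ℝ)) * ∑ i, (D i)^2
      ≤ (lam/(n:ℝ)) * ((∑ j, |β0 j|) - ∑ j, |βh j|)
        + (2/(n:ℝ)) * ∑ i, (a i + v i) * D i := by
    have H := hmin β0
    have e1 : ∀ i, (y i - ∑ j, f i j * βh j) = (a i + v i) - D i := by
      intro i; rw [hy i, hDi i]; ring
    have e2 : ∀ i, (y i - ∑ j, f i j * β0 j) = a i + v i := by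
      intro i; rw [hy i]; ring
    simp only [e1, e2] at H
    have expand : ∑ i, ((a i + v i) - D i)^2
        = (∑ i, (a i + v i)^2) - 2 * (∑ i, (a i + v i) * D i) + ∑ i, (D i)^2 := by
      rw [Finset.mul_sum, ← Finset.sum_sub_distrib, ← Finset.sum_add_distrib]
      exact Finset.sum_congr rfl fun i _ => by ring
    rw [expand] at H
    have rid : (1/(n:ℝ)) * ((∑ i, (a i + v i)^2) - 2 * (∑ i, (a i + v i) * D i)
          + ∑ i, (D i)^2)
        = (1/(n:ℝ)) * (∑ i, (a i + v i)^2) - (2/(n:ℝ)) * (∑ i, (a i + v i) * D i)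
          + (1/(n:ℝ)) * ∑ i, (D i)^2 := by ring
    have rid2 : (lam/(n:ℝ)) * ((∑ j, |β0 j|) - ∑ j, |βh j|)
        = (lam/(n:ℝ)) * (∑ j, |β0 j|) - (lam/(n:ℝ)) * ∑ j, |βh j| := by ring
    linarith [H, rid, rid2]
  -- split cross term
  have split : ∑ i, (a i + v i) * D i = (∑ i, a i * D i) + ∑ i, v i * D i := by
    rw [← Finset.sum_add_distrib]
    exact Finset.sum_congr rfl fun i _ => by ring
  -- Cauchy-Schwarz bound on approximation error term
  have hC : 0 ≤ (1/(n:ℝ)) * ∑ i, (D i)^2 := by positivity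
  have csbd : (2/(n:ℝ)) * ∑ i, a i * D i
      ≤ 2 * cs * Real.sqrt ((1/(n:ℝ)) * ∑ i, (D i)^2) := by
    have CS : (∑ i, a i * D i)^2 ≤ (∑ i, (a i)^2) * ∑ i, (D i)^2 :=
      Finset.sum_mul_sq_le_sq_mul_sq Finset.univ a D
    have hA : 0 ≤ ∑ i, (a i)^2 := by positivity
    have hsq : ((1/(n:ℝ)) * ∑ i, a i * D i)^2
        ≤ cs^2 * ((1/(n:ℝ)) * ∑ i, (D i)^2) := by
      have h1 := mul_le_mul_of_nonneg_right ha hC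
      nlinarith [mul_le_mul_of_nonneg_left CS (by positivity : (0:ℝ) ≤ (1/(n:ℝ))^2)]
    have step : (1/(n:ℝ)) * ∑ i, a i * D i
        ≤ cs * Real.sqrt ((1/(n:ℝ)) * ∑ i, (D i)^2) := by
      calc (1/(n:ℝ)) * ∑ i, a i * D i
          ≤ |(1/(n:ℝ)) * ∑ i, a i * D i| := le_abs_self _
        _ = Real.sqrt (((1/(n:ℝ)) * ∑ i, a i * D i)^2) := (Real.sqrt_sq_eq_abs _).symm
        _ ≤ Real.sqrt (cs^2 * ((1/(n:ℝ)) * ∑ i, (D i)^2)) := Real.sqrt_le_sqrt hsq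
        _ = cs * Real.sqrt ((1/(n:ℝ)) * ∑ i, (D i)^2) := by
            rw [Real.sqrt_mul (sq_nonneg cs), Real.sqrt_sq hcs]
    have rid3 : (2/(n:ℝ)) * ∑ i, a i * D i = 2 * ((1/(n:ℝ)) * ∑ i, a i * D i) := by
      ring
    linarith [step, rid3]
  -- score term
  have swap : (2/(n:ℝ)) * ∑ i, v i * D i = ∑ j, δ j * S j := by
    simp only [hDdef, hS]
    rw [Finset.mul_sum]
    simp_rw [Finset.mul_sum]
    rw [Finset.sum_comm]
    exact Finset.sum_congr rfl fun j _ => Finset.sum_congr rfl fun i _ => by ring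
  have score : (2/(n:ℝ)) * ∑ i, v i * D i ≤ (lam/(c*(n:ℝ))) * ∑ j, |δ j| := by
    rw [swap]
    calc ∑ j, δ j * S j ≤ ∑ j, |δ j| * M := by
          refine Finset.sum_le_sum fun j _ => ?_
          calc δ j * S j ≤ |δ j * S j| := le_abs_self _
            _ = |δ j| * |S j| := abs_mul _ _
            _ ≤ |δ j| * M := mul_le_mul_of_nonneg_left (hMle j) (abs_nonneg _)
      _ = M * ∑ j, |δ j| := by rw [← Finset.sum_mul]; ring
      _ ≤ (lam/(c*(n:ℝ))) * ∑ j, |δ j| :=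
          mul_le_mul_of_nonneg_right hM1 (by positivity)
  -- ℓ1 decomposition
  have sumsplit : ∀ g : Fin p → ℝ, ∑ j, g j = (∑ j ∈ T, g j) + ∑ j ∈ Tᶜ, g j :=
    fun g => (Finset.sum_add_sum_compl T g).symm
  have hTc0 : ∀ j ∈ Tᶜ, β0 j = 0 := by
    intro j hj
    simp only [hT, Finset.mem_compl, Finset.mem_filter, Finset.mem_univ, true_and,
      not_not] at hj
    exact hj
  have l1 : (∑ j, |β0 j|) - ∑ j, |βh j| ≤ (∑ j ∈ T, |δ j|) - ∑ j ∈ Tᶜ, |δ j| := by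
    rw [sumsplit (fun j => |β0 j|), sumsplit (fun j => |βh j|)]
    have e0 : ∑ j ∈ Tᶜ, |β0 j| = 0 :=
      Finset.sum_eq_zero fun j hj => by rw [hTc0 j hj, abs_zero]
    have e1 : ∑ j ∈ Tᶜ, |βh j| = ∑ j ∈ Tᶜ, |δ j| :=
      Finset.sum_congr rfl fun j hj => by simp [hδ, hTc0 j hj]
    have e2 : ∑ j ∈ T, |β0 j| - ∑ j ∈ T, |βh j| ≤ ∑ j ∈ T, |δ j| := by
      rw [← Finset.sum_sub_distrib]
      refine Finset.sum_le_sum fun j _ => ?_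
      calc |β0 j| - |βh j| ≤ |β0 j - βh j| := abs_sub_abs_le_abs_sub _ _
        _ = |δ j| := by rw [abs_sub_comm]
    linarith [e0, e1, e2]
  -- combine
  have hlsum : ∑ j, |δ j| = (∑ j ∈ T, |δ j|) + ∑ j ∈ Tᶜ, |δ j| :=
    sumsplit (fun j => |δ j|)
  have hlnn : 0 ≤ lam / (n:ℝ) := by positivity
  have hmul := mul_le_mul_of_nonneg_left l1 hlnn
  have feq : (lam/(n:ℝ)) * ((∑ j ∈ T, |δ j|) - ∑ j ∈ Tᶜ, |δ j|)
      + (lam/(c*(n:ℝ))) * ((∑ j ∈ T, |δ j|) + ∑ j ∈ Tᶜ, |δ j|)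
      = (1 + 1/c) * (lam/(n:ℝ)) * (∑ j ∈ T, |δ j|)
        - (1 - 1/c) * (lam/(n:ℝ)) * (∑ j ∈ Tᶜ, |δ j|) := by
    field_simp
    ring
  have score' : (2/(n:ℝ)) * ∑ i, v i * D i
      ≤ (lam/(c*(n:ℝ))) * ((∑ j ∈ T, |δ j|) + ∑ j ∈ Tᶜ, |δ j|) := by
    rw [← hlsum]; exact score
  have crossid : (2/(n:ℝ)) * ∑ i, (a i + v i) * D i
      = (2/(n:ℝ)) * (∑ i, a i * D i) + (2/(n:ℝ)) * ∑ i, v i * D i := by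
    rw [split]; ring
  linarith [key, csbd, score', hmul, feq, crossid]
end

section
/- LASSO cone membership: under the basic LASSO inequality with λ ≥ c·n‖S‖_∞, c > 1, the estimation error δ = β̂ - β_0 satisfies either ‖f_i'δ‖_{2,n} ≤ 2c_s or ‖δ_{T^c}‖_1 ≤ c_0‖δ_T‖_1, where c_0 = (c+1)/(c-1). -/
set_option maxHeartbeats 800000


open Finset

/-- LASSO cone membership: under the LASSO optimality and `λ ≥ c·n‖S‖_∞`, `c > 1`, the
error `δ = β̂ - β_0` satisfies either `‖f'δ‖_{2,n} ≤ 2 c_s` or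
`‖δ_{T^c}‖₁ ≤ c₀ ‖δ_T‖₁` with `c₀ = (c+1)/(c-1)`. -/
theorem stmt_5 (n p : ℕ) (hn : 0 < n) (hp : 0 < p)
    (f : Fin n → Fin p → ℝ) (β0 βh : Fin p → ℝ) (a v y : Fin n → ℝ)
    (cs lam c : ℝ) (hc : 1 < c) (hcs : 0 ≤ cs)
    (hy : ∀ i, y i = (∑ j, f i j * β0 j) + a i + v i)
    (ha : (1/(n:ℝ)) * ∑ i, (a i)^2 ≤ cs^2)
    (hlam : c * ((n:ℝ) * ⨆ j, |(2/(n:ℝ)) * ∑ i, f i j * v i|) ≤ lam)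
    (hmin : ∀ β : Fin p → ℝ,
      (1/(n:ℝ)) * (∑ i, (y i - ∑ j, f i j * βh j)^2) + (lam/(n:ℝ)) * ∑ j, |βh j|
        ≤ (1/(n:ℝ)) * (∑ i, (y i - ∑ j, f i j * β j)^2) + (lam/(n:ℝ)) * ∑ j, |β j|) :
    Real.sqrt ((1/(n:ℝ)) * ∑ i, (∑ j, f i j * (βh j - β0 j))^2) ≤ 2 * cs
    ∨ (∑ j ∈ (Finset.univ.filter (fun j => β0 j ≠ 0))ᶜ, |βh j - β0 j|)
        ≤ (c+1)/(c-1) * ∑ j ∈ Finset.univ.filter (fun j => β0 j ≠ 0), |βh j - β0 j| := by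
  have hn' : (0:ℝ) < n := by exact_mod_cast hn
  have hc0 : (0:ℝ) < c := by linarith
  set T : Finset (Fin p) := Finset.univ.filter (fun j => β0 j ≠ 0) with hT
  have hQ0 : (0:ℝ) ≤ (1/(n:ℝ)) * ∑ i, (∑ j, f i j * (βh j - β0 j))^2 := by positivity
  set Q : ℝ := (1/(n:ℝ)) * ∑ i, (∑ j, f i j * (βh j - β0 j))^2 with hQdef
  set A : ℝ := ∑ j ∈ T, |βh j - β0 j| with hA
  set B : ℝ := ∑ j ∈ Tᶜ, |βh j - β0 j| with hB
  have hA0 : 0 ≤ A := Finset.sum_nonneg fun j _ => abs_nonneg _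
  have hB0 : 0 ≤ B := Finset.sum_nonneg fun j _ => abs_nonneg _
  set M : ℝ := ⨆ j, |(2/(n:ℝ)) * ∑ i, f i j * v i| with hM
  have hMub : ∀ j, |(2/(n:ℝ)) * ∑ i, f i j * v i| ≤ M := by
    intro j
    exact le_ciSup (f := fun j => |(2/(n:ℝ)) * ∑ i, f i j * v i|)
      (Set.Finite.bddAbove (Set.finite_range _)) j
  have hM0 : 0 ≤ M := le_trans (abs_nonneg _) (hMub ⟨0, hp⟩)
  have hlam0 : 0 ≤ lam := le_trans (by positivity) hlam
  have hMlam : M ≤ lam / (c * n) := by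
    rw [le_div_iff₀ (by positivity)]
    nlinarith [hlam]
  have hopt := hmin β0
  have hexp1 : ∀ i, y i - ∑ j, f i j * βh j = (a i + v i) - ∑ j, f i j * (βh j - β0 j) := by
    intro i
    have hsub : ∑ j, f i j * (βh j - β0 j)
        = (∑ j, f i j * βh j) - ∑ j, f i j * β0 j := by
      rw [← Finset.sum_sub_distrib]
      exact Finset.sum_congr rfl fun j _ => by ring
    rw [hy i, hsub]; ring
  have hexp2 : ∀ i, y i - ∑ j, f i j * β0 j = a i + v i := by
    intro i; rw [hy i]; ring
  have key : Q ≤ (2/(n:ℝ)) * ∑ i, (a i + v i) * (∑ j, f i j * (βh j - β0 j))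
      + (lam/(n:ℝ)) * ((∑ j, |β0 j|) - ∑ j, |βh j|) := by
    have h1 : ∑ i, (y i - ∑ j, f i j * βh j)^2
        = (∑ i, (a i + v i)^2) - 2 * (∑ i, (a i + v i) * (∑ j, f i j * (βh j - β0 j)))
          + ∑ i, (∑ j, f i j * (βh j - β0 j))^2 := by
      calc ∑ i, (y i - ∑ j, f i j * βh j)^2
          = ∑ i, ((a i + v i)^2 - 2 * ((a i + v i) * (∑ j, f i j * (βh j - β0 j)))
              + (∑ j, f i j * (βh j - β0 j))^2) :=
            Finset.sum_congr rfl fun i _ => by rw [hexp1 i]; ring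
        _ = _ := by
            rw [Finset.sum_add_distrib, Finset.sum_sub_distrib, ← Finset.mul_sum]
    have h2 : ∑ i, (y i - ∑ j, f i j * β0 j)^2 = ∑ i, (a i + v i)^2 :=
      Finset.sum_congr rfl fun i _ => by rw [hexp2 i]
    rw [h1, h2] at hopt
    rw [hQdef]
    have e1 : (1/(n:ℝ)) * ((∑ i, (a i + v i)^2)
          - 2 * (∑ i, (a i + v i) * (∑ j, f i j * (βh j - β0 j)))
          + ∑ i, (∑ j, f i j * (βh j - β0 j))^2)
        = (1/(n:ℝ)) * (∑ i, (a i + v i)^2)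
          - (2/(n:ℝ)) * (∑ i, (a i + v i) * (∑ j, f i j * (βh j - β0 j)))
          + (1/(n:ℝ)) * ∑ i, (∑ j, f i j * (βh j - β0 j))^2 := by ring
    have e2 : (lam/(n:ℝ)) * ((∑ j, |β0 j|) - ∑ j, |βh j|)
        = (lam/(n:ℝ)) * (∑ j, |β0 j|) - (lam/(n:ℝ)) * ∑ j, |βh j| := by ring
    rw [e1] at hopt
    rw [e2]
    linarith [hopt]
  -- cross term: v part
  have hv : (2/(n:ℝ)) * ∑ i, v i * (∑ j, f i j * (βh j - β0 j))
      ≤ (lam / (c * n)) * (A + B) := by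
    have hswap : (2/(n:ℝ)) * ∑ i, v i * (∑ j, f i j * (βh j - β0 j))
        = ∑ j, (βh j - β0 j) * ((2/(n:ℝ)) * ∑ i, f i j * v i) := by
      rw [Finset.mul_sum]
      rw [show (∑ i, (2/(n:ℝ)) * (v i * ∑ j, f i j * (βh j - β0 j)))
          = ∑ i, ∑ j, (βh j - β0 j) * ((2/(n:ℝ)) * (f i j * v i)) from
        Finset.sum_congr rfl fun i _ => by
          rw [Finset.mul_sum, Finset.mul_sum]
          exact Finset.sum_congr rfl fun j _ => by ring]
      rw [Finset.sum_comm]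
      exact Finset.sum_congr rfl fun j _ => by rw [Finset.mul_sum, Finset.mul_sum]
    rw [hswap]
    have hAB : A + B = ∑ j, |βh j - β0 j| := by
      rw [hA, hB]; exact Finset.sum_add_sum_compl T _
    rw [hAB, Finset.mul_sum]
    apply Finset.sum_le_sum
    intro j _
    calc (βh j - β0 j) * ((2/(n:ℝ)) * ∑ i, f i j * v i)
        ≤ |(βh j - β0 j) * ((2/(n:ℝ)) * ∑ i, f i j * v i)| := le_abs_self _
      _ = |βh j - β0 j| * |(2/(n:ℝ)) * ∑ i, f i j * v i| := abs_mul _ _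
      _ ≤ |βh j - β0 j| * (lam / (c*n)) :=
          mul_le_mul_of_nonneg_left (le_trans (hMub j) hMlam) (abs_nonneg _)
      _ = lam / (c*n) * |βh j - β0 j| := by ring
  -- cross term: a part (Cauchy-Schwarz)
  have hsq : Real.sqrt Q ^ 2 = Q := Real.sq_sqrt hQ0
  have hsqrt0 : 0 ≤ Real.sqrt Q := Real.sqrt_nonneg _
  have hca : (2/(n:ℝ)) * ∑ i, a i * (∑ j, f i j * (βh j - β0 j)) ≤ 2 * cs * Real.sqrt Q := by
    have hcs2 : (∑ i, a i * (∑ j, f i j * (βh j - β0 j)))^2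
        ≤ (∑ i, (a i)^2) * ∑ i, (∑ j, f i j * (βh j - β0 j))^2 :=
      Finset.sum_mul_sq_le_sq_mul_sq Finset.univ _ _
    have hsum2 : ∑ i, (∑ j, f i j * (βh j - β0 j))^2 = (n:ℝ) * Q := by
      rw [hQdef]; field_simp
    have hsuma : ∑ i, (a i)^2 ≤ (n:ℝ) * cs^2 := by
      have h := mul_le_mul_of_nonneg_left ha (le_of_lt hn')
      rwa [show (n:ℝ) * ((1/(n:ℝ)) * ∑ i, (a i)^2) = ∑ i, (a i)^2 by field_simp] at h
    have habs : (∑ i, a i * (∑ j, f i j * (βh j - β0 j)))^2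
        ≤ ((n:ℝ) * cs * Real.sqrt Q)^2 := by
      have hQn : (0:ℝ) ≤ (n:ℝ) * Q := by positivity
      calc (∑ i, a i * (∑ j, f i j * (βh j - β0 j)))^2
          ≤ (∑ i, (a i)^2) * ∑ i, (∑ j, f i j * (βh j - β0 j))^2 := hcs2
        _ ≤ ((n:ℝ) * cs^2) * ((n:ℝ) * Q) := by
            rw [hsum2]
            exact mul_le_mul_of_nonneg_right hsuma hQn
        _ = ((n:ℝ) * cs * Real.sqrt Q)^2 := by
            rw [mul_pow ((n:ℝ)*cs) (Real.sqrt Q) 2, hsq]; ring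
    have hR0 : 0 ≤ (n:ℝ) * cs * Real.sqrt Q := by positivity
    have h1 : ∑ i, a i * (∑ j, f i j * (βh j - β0 j)) ≤ (n:ℝ) * cs * Real.sqrt Q := by
      set s := ∑ i, a i * (∑ j, f i j * (βh j - β0 j)) with hs
      set R := (n:ℝ) * cs * Real.sqrt Q with hR
      nlinarith [habs, hR0, sq_nonneg (s + R)]
    calc (2/(n:ℝ)) * ∑ i, a i * (∑ j, f i j * (βh j - β0 j))
        ≤ (2/(n:ℝ)) * ((n:ℝ) * cs * Real.sqrt Q) :=
          mul_le_mul_of_nonneg_left h1 (by positivity)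
      _ = 2 * cs * Real.sqrt Q := by field_simp
  -- norm difference
  have hnorm : (∑ j, |β0 j|) - (∑ j, |βh j|) ≤ A - B := by
    have e1 : ∑ j, |β0 j| = (∑ j ∈ T, |β0 j|) + ∑ j ∈ Tᶜ, |β0 j| :=
      (Finset.sum_add_sum_compl T _).symm
    have e2 : ∑ j, |βh j| = (∑ j ∈ T, |βh j|) + ∑ j ∈ Tᶜ, |βh j| :=
      (Finset.sum_add_sum_compl T _).symm
    have hTc0 : ∀ j ∈ Tᶜ, β0 j = 0 := by
      intro j hj
      simp [hT, Finset.mem_compl, Finset.mem_filter] at hj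
      exact hj
    have hTb : (∑ j ∈ T, |β0 j|) - (∑ j ∈ T, |βh j|) ≤ A := by
      rw [hA, ← Finset.sum_sub_distrib]
      refine Finset.sum_le_sum fun j _ => ?_
      have h := abs_sub_abs_le_abs_sub (β0 j) (βh j)
      rwa [abs_sub_comm] at h
    have hTcb : (∑ j ∈ Tᶜ, |β0 j|) - (∑ j ∈ Tᶜ, |βh j|) = -B := by
      rw [hB, ← Finset.sum_sub_distrib, ← Finset.sum_neg_distrib]
      exact Finset.sum_congr rfl fun j hj => by rw [hTc0 j hj]; simp
    rw [e1, e2]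
    linarith [hTb, hTcb]
  -- combine
  have main : Q ≤ (lam/(c*n)) * (A+B) + (lam/(n:ℝ)) * (A - B) + 2*cs*Real.sqrt Q := by
    have hsplit : (2/(n:ℝ)) * ∑ i, (a i + v i) * (∑ j, f i j * (βh j - β0 j))
        = (2/(n:ℝ)) * (∑ i, a i * (∑ j, f i j * (βh j - β0 j)))
          + (2/(n:ℝ)) * ∑ i, v i * (∑ j, f i j * (βh j - β0 j)) := by
      rw [show (∑ i, (a i + v i) * (∑ j, f i j * (βh j - β0 j)))
          = (∑ i, a i * (∑ j, f i j * (βh j - β0 j)))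
            + ∑ i, v i * (∑ j, f i j * (βh j - β0 j)) from by
        rw [← Finset.sum_add_distrib]
        exact Finset.sum_congr rfl fun i _ => by ring]
      ring
    have hlamdiff : (lam/(n:ℝ)) * ((∑ j, |β0 j|) - ∑ j, |βh j|) ≤ (lam/(n:ℝ)) * (A - B) :=
      mul_le_mul_of_nonneg_left hnorm (by positivity)
    rw [hsplit] at key
    linarith [key, hca, hv, hlamdiff]
  -- case split
  by_cases hcase : Real.sqrt Q ≤ 2 * cs
  · exact Or.inl hcase
  · right
    push_neg at hcase
    have hsq0 : 0 < Real.sqrt Q := lt_of_le_of_lt (by linarith) hcase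
    have hQgt : 2 * cs * Real.sqrt Q < Q := by nlinarith [hsq]
    have hpos : 0 < (lam/(c*n)) * (A+B) + (lam/(n:ℝ)) * (A - B) := by linarith
    have heq : (lam/(c*n)) * (A+B) + (lam/(n:ℝ)) * (A - B)
        = (lam/(n:ℝ)) * ((A+B)/c + (A-B)) := by
      field_simp
    rw [heq] at hpos
    have hfrac : 0 ≤ lam / (n:ℝ) := by positivity
    have hX : 0 < (A+B)/c + (A-B) := by
      by_contra hXc
      push_neg at hXc
      nlinarith [hpos, hfrac, hXc]
    have hXc : 0 < (A+B) + c*(A-B) := by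
      have h := mul_pos hc0 hX
      have e : c * ((A+B)/c + (A-B)) = (A+B) + c*(A-B) := by field_simp
      linarith [e ▸ h]
    rw [div_mul_eq_mul_div, le_div_iff₀ (by linarith : (0:ℝ) < c - 1)]
    nlinarith [hXc]
end

section
/- LASSO prediction rate (deterministic form): if λ ≥ c·n‖S‖_∞ with c > 1 and the restricted eigenvalue κ_{c_0} > 0 with c_0 = (c+1)/(c-1), then the LASSO error δ = β̂ - β_0 satisfies ‖f_i'δ‖_{2,n} ≤ 2λ√s/(n·κ_{c_0}) + 2c_s. -/
open Finset

set_option maxHeartbeats 1000000 in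
/-- LASSO prediction rate (deterministic form): if `λ ≥ c·n‖S‖_∞` with `c > 1` and the
restricted eigenvalue `κ = κ_{c₀} > 0` with `c₀ = (c+1)/(c-1)`, then the LASSO error
`δ = β̂ - β_0` satisfies `‖f'δ‖_{2,n} ≤ 2λ√s/(n κ) + 2 c_s`, where `s = |T|`. -/
theorem stmt_6 (n p : ℕ) (hn : 0 < n) (hp : 0 < p)
    (f : Fin n → Fin p → ℝ) (β0 βh : Fin p → ℝ) (a v y : Fin n → ℝ)
    (cs lam c κ : ℝ) (hc : 1 < c) (hcs : 0 ≤ cs) (hlam0 : 0 ≤ lam) (hκ : 0 < κ)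
    (hy : ∀ i, y i = (∑ j, f i j * β0 j) + a i + v i)
    (ha : (1/(n:ℝ)) * ∑ i, (a i)^2 ≤ cs^2)
    (hlam : c * ((n:ℝ) * ⨆ j, |(2/(n:ℝ)) * ∑ i, f i j * v i|) ≤ lam)
    (hmin : ∀ β : Fin p → ℝ,
      (1/(n:ℝ)) * (∑ i, (y i - ∑ j, f i j * βh j)^2) + (lam/(n:ℝ)) * ∑ j, |βh j|
        ≤ (1/(n:ℝ)) * (∑ i, (y i - ∑ j, f i j * β j)^2) + (lam/(n:ℝ)) * ∑ j, |β j|)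
    (hRE : ∀ δ : Fin p → ℝ, δ ≠ 0 →
      (∑ j ∈ (Finset.univ.filter (fun j => β0 j ≠ 0))ᶜ, |δ j|)
        ≤ (c+1)/(c-1) * ∑ j ∈ Finset.univ.filter (fun j => β0 j ≠ 0), |δ j| →
      κ * (∑ j ∈ Finset.univ.filter (fun j => β0 j ≠ 0), |δ j|)
        ≤ Real.sqrt ((Finset.univ.filter (fun j => β0 j ≠ 0)).card)
            * Real.sqrt ((1/(n:ℝ)) * ∑ i, (∑ j, f i j * δ j)^2)) :
    Real.sqrt ((1/(n:ℝ)) * ∑ i, (∑ j, f i j * (βh j - β0 j))^2)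
      ≤ 2 * lam * Real.sqrt ((Finset.univ.filter (fun j => β0 j ≠ 0)).card) / ((n:ℝ) * κ)
        + 2 * cs := by
  have hn' : (0:ℝ) < n := by exact_mod_cast hn
  have hc0 : (0:ℝ) < c := by linarith
  set T : Finset (Fin p) := Finset.univ.filter (fun j => β0 j ≠ 0) with hTdef
  set δ : Fin p → ℝ := fun j => βh j - β0 j with hδdef
  have hδj : ∀ j, βh j - β0 j = δ j := fun _ => rfl
  set d : Fin n → ℝ := fun i => ∑ j, f i j * δ j with hddef
  have hdi : ∀ i, (∑ j, f i j * δ j) = d i := fun _ => rfl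
  simp only [hδj, hdi]
  -- goal : √((1/n) * ∑ i, d i ^ 2) ≤ 2*lam*√T.card/(n*κ) + 2*cs
  set q2 : ℝ := (1/(n:ℝ)) * ∑ i, (d i)^2 with hq2def
  have hq2nn : (0:ℝ) ≤ q2 := by
    rw [hq2def]; positivity
  set Q : ℝ := Real.sqrt q2 with hQdef
  have hQnn : 0 ≤ Q := Real.sqrt_nonneg _
  have hQ2 : Q^2 = q2 := Real.sq_sqrt hq2nn
  set s : ℝ := Real.sqrt (T.card : ℝ) with hsdef
  have hsnn : 0 ≤ s := Real.sqrt_nonneg _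
  -- weights on support and off support
  set A : ℝ := ∑ j ∈ T, |δ j| with hAdef
  set B : ℝ := ∑ j ∈ Tᶜ, |δ j| with hBdef
  have hAnn : 0 ≤ A := Finset.sum_nonneg fun j _ => abs_nonneg _
  have hBnn : 0 ≤ B := Finset.sum_nonneg fun j _ => abs_nonneg _
  have hABsum : (∑ j, |δ j|) = A + B := by
    rw [hAdef, hBdef, Finset.sum_add_sum_compl]
  -- basic inequality from minimality
  have hbasic : q2 ≤ (2/(n:ℝ)) * (∑ i, (a i + v i) * d i)
      + (lam/(n:ℝ)) * ((∑ j, |β0 j|) - ∑ j, |βh j|) := by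
    have h := hmin β0
    have hdi2 : ∀ i, d i = (∑ j, f i j * βh j) - ∑ j, f i j * β0 j := by
      intro i
      rw [← Finset.sum_sub_distrib]
      exact Finset.sum_congr rfl (fun j _ => by rw [← hδj]; ring)
    have e1 : ∑ i, (y i - ∑ j, f i j * βh j)^2
        = ∑ i, (((a i + v i)^2 - 2*((a i + v i) * d i)) + (d i)^2) := by
      refine Finset.sum_congr rfl (fun i _ => ?_)
      rw [hy i, hdi2 i]; ring
    have e2 : ∑ i, (y i - ∑ j, f i j * β0 j)^2 = ∑ i, (a i + v i)^2 := by
      refine Finset.sum_congr rfl (fun i _ => ?_); rw [hy i]; ring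
    rw [e1, e2, Finset.sum_add_distrib, Finset.sum_sub_distrib, ← Finset.mul_sum] at h
    have r1 : (1/(n:ℝ)) * (((∑ i, (a i + v i)^2) - 2 * ∑ i, (a i + v i) * d i) + ∑ i, (d i)^2)
        = (1/(n:ℝ)) * (∑ i, (a i + v i)^2) - (2/(n:ℝ)) * (∑ i, (a i + v i) * d i)
          + (1/(n:ℝ)) * ∑ i, (d i)^2 := by ring
    have r2 : (lam/(n:ℝ)) * ((∑ j, |β0 j|) - ∑ j, |βh j|)
        = (lam/(n:ℝ)) * (∑ j, |β0 j|) - (lam/(n:ℝ)) * ∑ j, |βh j| := by ring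
    rw [r1] at h
    rw [hq2def]
    linarith [h, r2]
  -- Cauchy-Schwarz bound for the approximation-error term
  have hCS : (2/(n:ℝ)) * (∑ i, a i * d i) ≤ 2 * cs * Q := by
    have h1 : (∑ i, a i * d i)^2 ≤ (∑ i, (a i)^2) * (∑ i, (d i)^2) :=
      Finset.sum_mul_sq_le_sq_mul_sq _ _ _
    have hSann : (0:ℝ) ≤ ∑ i, (a i)^2 := Finset.sum_nonneg fun i _ => sq_nonneg _
    have h2 : (∑ i, a i * d i) ≤ Real.sqrt ((∑ i, (a i)^2) * (∑ i, (d i)^2)) := by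
      calc (∑ i, a i * d i) ≤ |∑ i, a i * d i| := le_abs_self _
        _ = Real.sqrt ((∑ i, a i * d i)^2) := (Real.sqrt_sq_eq_abs _).symm
        _ ≤ _ := Real.sqrt_le_sqrt h1
    have h3 : Real.sqrt ((1/(n:ℝ)) * ∑ i, (a i)^2) ≤ cs := by
      calc Real.sqrt ((1/(n:ℝ)) * ∑ i, (a i)^2) ≤ Real.sqrt (cs^2) := Real.sqrt_le_sqrt ha
        _ = cs := Real.sqrt_sq hcs
    have h1n : (0:ℝ) ≤ 1/(n:ℝ) := by positivity
    have key : Real.sqrt ((1/(n:ℝ)) * ∑ i, (a i)^2) * Q = (1/(n:ℝ)) * Real.sqrt ((∑ i, (a i)^2) * (∑ i, (d i)^2)) := by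
      rw [hQdef, hq2def, ← Real.sqrt_mul (by positivity),
        show (1/(n:ℝ) * ∑ i, (a i)^2) * (1/(n:ℝ) * ∑ i, (d i)^2)
          = (1/(n:ℝ))^2 * ((∑ i, (a i)^2) * ∑ i, (d i)^2) by ring,
        Real.sqrt_mul (sq_nonneg _), Real.sqrt_sq h1n]
    calc (2/(n:ℝ)) * (∑ i, a i * d i)
        ≤ (2/(n:ℝ)) * Real.sqrt ((∑ i, (a i)^2) * (∑ i, (d i)^2)) := by
          apply mul_le_mul_of_nonneg_left h2 (by positivity)
      _ = 2 * (Real.sqrt ((1/(n:ℝ)) * ∑ i, (a i)^2) * Q) := by rw [key]; ring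
      _ ≤ 2 * (cs * Q) := by
          apply mul_le_mul_of_nonneg_left (mul_le_mul_of_nonneg_right h3 hQnn) (by norm_num)
      _ = 2 * cs * Q := by ring
  -- noise term bound
  have hV : (2/(n:ℝ)) * (∑ i, v i * d i) ≤ (lam/(c*(n:ℝ))) * (A + B) := by
    have hswap : (∑ i, v i * d i) = ∑ j, (∑ i, f i j * v i) * δ j := by
      simp only [hddef]
      calc ∑ i, v i * ∑ j, f i j * δ j = ∑ i, ∑ j, v i * (f i j * δ j) := by
            exact Finset.sum_congr rfl fun i _ => Finset.mul_sum _ _ _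
        _ = ∑ j, ∑ i, v i * (f i j * δ j) := Finset.sum_comm
        _ = ∑ j, (∑ i, f i j * v i) * δ j := by
            refine Finset.sum_congr rfl fun j _ => ?_
            rw [Finset.sum_mul]
            exact Finset.sum_congr rfl fun i _ => by ring
    have hsup : ∀ j, |(2/(n:ℝ)) * ∑ i, f i j * v i| ≤ ⨆ j', |(2/(n:ℝ)) * ∑ i, f i j' * v i| := by
      intro j
      exact le_ciSup (f := fun j' => |(2/(n:ℝ)) * ∑ i, f i j' * v i|)
        (Set.Finite.bddAbove (Set.finite_range _)) j
    have hsuple : (⨆ j', |(2/(n:ℝ)) * ∑ i, f i j' * v i|) ≤ lam/(c*(n:ℝ)) := by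
      rw [le_div_iff₀ (by positivity)]
      nlinarith [hlam]
    calc (2/(n:ℝ)) * (∑ i, v i * d i) = ∑ j, ((2/(n:ℝ)) * ∑ i, f i j * v i) * δ j := by
          rw [hswap, Finset.mul_sum]
          exact Finset.sum_congr rfl fun j _ => by ring
      _ ≤ ∑ j, (lam/(c*(n:ℝ))) * |δ j| := by
          refine Finset.sum_le_sum fun j _ => ?_
          calc ((2/(n:ℝ)) * ∑ i, f i j * v i) * δ j
              ≤ |((2/(n:ℝ)) * ∑ i, f i j * v i) * δ j| := le_abs_self _
            _ = |(2/(n:ℝ)) * ∑ i, f i j * v i| * |δ j| := abs_mul _ _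
            _ ≤ (lam/(c*(n:ℝ))) * |δ j| :=
                mul_le_mul_of_nonneg_right ((hsup j).trans hsuple) (abs_nonneg _)
      _ = (lam/(c*(n:ℝ))) * ∑ j, |δ j| := (Finset.mul_sum _ _ _).symm
      _ = (lam/(c*(n:ℝ))) * (A + B) := by rw [hABsum]
  -- l1 norm comparison
  have hTb : (∑ j, |β0 j|) - (∑ j, |βh j|) ≤ A - B := by
    have e0 : ∀ (g : Fin p → ℝ), (∑ j, g j) = (∑ j ∈ T, g j) + ∑ j ∈ Tᶜ, g j := fun g =>
      (Finset.sum_add_sum_compl T g).symm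
    rw [e0 (fun j => |β0 j|), e0 (fun j => |βh j|)]
    have h1 : (∑ j ∈ T, |β0 j|) - ∑ j ∈ T, |βh j| ≤ A := by
      rw [hAdef, ← Finset.sum_sub_distrib]
      refine Finset.sum_le_sum fun j _ => ?_
      calc |β0 j| - |βh j| ≤ |β0 j - βh j| := abs_sub_abs_le_abs_sub _ _
        _ = |δ j| := by rw [← hδj, abs_sub_comm]
    have h2 : (∑ j ∈ Tᶜ, |βh j|) = B := by
      rw [hBdef]
      refine Finset.sum_congr rfl fun j hj => ?_
      have hj0 : β0 j = 0 := by
        simp only [hTdef, Finset.mem_compl, Finset.mem_filter, Finset.mem_univ, true_and,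
          not_not] at hj
        exact hj
      rw [← hδj, hj0, sub_zero]
    have h3 : (∑ j ∈ Tᶜ, |β0 j|) = 0 := by
      refine Finset.sum_eq_zero fun j hj => ?_
      have hj0 : β0 j = 0 := by
        simp only [hTdef, Finset.mem_compl, Finset.mem_filter, Finset.mem_univ, true_and,
          not_not] at hj
        exact hj
      rw [hj0, abs_zero]
    rw [h2, h3]
    linarith
  -- combine into the master inequality
  have hmain : q2 ≤ 2*cs*Q + (lam/(c*(n:ℝ)))*(A+B) + (lam/(n:ℝ))*(A - B) := by
    have hsplit : (∑ i, (a i + v i) * d i) = (∑ i, a i * d i) + ∑ i, v i * d i := by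
      rw [← Finset.sum_add_distrib]
      exact Finset.sum_congr rfl fun i _ => by ring
    have r3 : (2/(n:ℝ)) * ((∑ i, a i * d i) + ∑ i, v i * d i)
        = (2/(n:ℝ)) * (∑ i, a i * d i) + (2/(n:ℝ)) * (∑ i, v i * d i) := by ring
    have hTb' : (lam/(n:ℝ)) * ((∑ j, |β0 j|) - ∑ j, |βh j|) ≤ (lam/(n:ℝ)) * (A - B) :=
      mul_le_mul_of_nonneg_left hTb (by positivity)
    rw [hsplit, r3] at hbasic
    linarith
  have hRHSnn : 0 ≤ 2*lam*s/((n:ℝ)*κ) :=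
    div_nonneg (mul_nonneg (mul_nonneg (by norm_num) hlam0) hsnn)
      (le_of_lt (mul_pos hn' hκ))
  -- the key claim
  have hclaim : (lam/(c*(n:ℝ)))*(A+B) + (lam/(n:ℝ))*(A - B) ≤ (2*lam*s/((n:ℝ)*κ)) * Q := by
    by_cases hδ0 : δ = 0
    · have hA0 : A = 0 := by simp [hAdef, hδ0]
      have hB0 : B = 0 := by simp [hBdef, hδ0]
      rw [hA0, hB0]
      have : (lam/(c*(n:ℝ)))*((0:ℝ)+0) + (lam/(n:ℝ))*((0:ℝ) - 0) = 0 := by ring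
      rw [this]
      exact mul_nonneg hRHSnn hQnn
    · by_cases hcase : B ≤ (c+1)/(c-1) * A
      · have hre := hRE δ hδ0 hcase
        simp only [hdi] at hre
        rw [← hq2def, ← hQdef] at hre
        -- hre : κ * A ≤ s * Q
        have hAle : A ≤ s * Q / κ := by
          rw [le_div_iff₀ hκ]
          linarith [hre]
        have h1 : lam/(c*(n:ℝ)) ≤ lam/(n:ℝ) := by
          gcongr
          nlinarith
        have h2 : (lam/(c*(n:ℝ)))*(A+B) ≤ (lam/(n:ℝ))*(A+B) :=
          mul_le_mul_of_nonneg_right h1 (by linarith)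
        have h3 : (lam/(n:ℝ))*(A+B) + (lam/(n:ℝ))*(A - B) = (lam/(n:ℝ))*(2*A) := by ring
        have h4 : (lam/(n:ℝ))*(2*A) ≤ (lam/(n:ℝ))*(2*(s*Q/κ)) := by
          apply mul_le_mul_of_nonneg_left (by linarith) (by positivity)
        have h5 : (lam/(n:ℝ))*(2*(s*Q/κ)) = (2*lam*s/((n:ℝ)*κ)) * Q := by
          field_simp
        linarith
      · push_neg at hcase
        have hc1 : (0:ℝ) < c - 1 := by linarith
        have hAB : (c+1)*A ≤ (c-1)*B := by
          have h := mul_le_mul_of_nonneg_left (le_of_lt hcase) (le_of_lt hc1)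
          rw [show (c-1)*((c+1)/(c-1)*A) = (c+1)*A by field_simp] at h
          linarith
        have hnum : (A+B) + c*(A-B) ≤ 0 := by nlinarith
        have he : (A+B)/(c*(n:ℝ)) + (A-B)/(n:ℝ) = ((A+B) + c*(A-B))/(c*(n:ℝ)) := by
          field_simp
        have hbr : (A+B)/(c*(n:ℝ)) + (A-B)/(n:ℝ) ≤ 0 := by
          rw [he]
          exact div_nonpos_iff.mpr (Or.inr ⟨hnum, by positivity⟩)
        have hLHS : (lam/(c*(n:ℝ)))*(A+B) + (lam/(n:ℝ))*(A - B)
            = lam * ((A+B)/(c*(n:ℝ)) + (A-B)/(n:ℝ)) := by ring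
        rw [hLHS]
        calc lam * ((A+B)/(c*(n:ℝ)) + (A-B)/(n:ℝ)) ≤ lam * 0 :=
              mul_le_mul_of_nonneg_left hbr hlam0
          _ = 0 := mul_zero lam
          _ ≤ (2*lam*s/((n:ℝ)*κ)) * Q := mul_nonneg hRHSnn hQnn
  -- conclude
  have hfinal : q2 ≤ (2*lam*s/((n:ℝ)*κ) + 2*cs) * Q := by
    have hr : (2*lam*s/((n:ℝ)*κ) + 2*cs) * Q = (2*lam*s/((n:ℝ)*κ))*Q + 2*cs*Q := by ring
    linarith
  rcases eq_or_lt_of_le hQnn with h0 | hpos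
  · rw [← h0] at hQ2 ⊢
    linarith [hRHSnn, hcs]
  · have hQQ : Q*Q ≤ (2*lam*s/((n:ℝ)*κ) + 2*cs) * Q := by nlinarith [hfinal, hQ2]
    exact le_of_mul_le_mul_right hQQ hpos
end
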